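/- Suppose positive reals a, b, c satisfy the triangle inequalities, a², b², c² ∈ ℕ, the triangle with sides a, b, c has area (√3/4)·n for some n ∈ ℕ, and a = r√t with r, t ∈ ℕ where t has no prime divisor ≡ 2 (mod 3). Then b and c also have the form r'√t' with r', t' ∈ ℕ and t' having no prime divisor ≡ 2 (mod 3). -/

import Mathlib

-- step 1: odd prime p ≡ 2 mod 3 dividing x²+3y² divides both x and y
lemma div_both (p : ℕ) (hp : p.Prime) (hp3 : p % 3 = 2) (hp2 : p ≠ 2)
    (x y : ℤ) (h : (p:ℤ) ∣ x^2 + 3*y^2) : (p:ℤ) ∣ x ∧ (p:ℤ) ∣ y := by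
  haveI : Fact p.Prime := ⟨hp⟩
  have h0 : (x : ZMod p)^2 + 3*(y : ZMod p)^2 = 0 := by
    have := (ZMod.intCast_zmod_eq_zero_iff_dvd _ p).mpr h
    push_cast at this
    exact this
  have hy : (y : ZMod p) = 0 := by
    by_contra hy
    set u : ZMod p := (x : ZMod p) * (y : ZMod p)⁻¹ with hu
    have hu2 : u^2 = -3 := by
      have hyinv : (y : ZMod p) * (y : ZMod p)⁻¹ = 1 := mul_inv_cancel₀ hy
      rw [hu]
      linear_combination ((y : ZMod p)⁻¹)^2 * h0 - 3 * ((y : ZMod p) * (y : ZMod p)⁻¹ + 1) * hyinv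
    have h2 : (2 : ZMod p) ≠ 0 := by
      intro h2
      have : ((2:ℕ) : ZMod p) = 0 := by exact_mod_cast h2
      have := (ZMod.natCast_eq_zero_iff 2 p).mp this
      exact hp2 ((Nat.prime_dvd_prime_iff_eq hp Nat.prime_two).mp this)
    set ω : ZMod p := (u - 1) * (2 : ZMod p)⁻¹ with hω
    have h2ω : 2 * ω = u - 1 := by
      rw [hω]; field_simp
    have hωeq : ω^2 + ω + 1 = 0 := by
      have h4 : (4 : ZMod p) ≠ 0 := by
        intro h4
        apply h2
        have : (2:ZMod p) * 2 = 0 := by linear_combination h4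
        rcases mul_eq_zero.mp this with h | h <;> exact h
      have : (4 : ZMod p) * (ω^2 + ω + 1) = 0 := by
        linear_combination (2*ω + u + 1) * h2ω + hu2
      rcases mul_eq_zero.mp this with h | h
      · exact absurd h h4
      · exact h
    have hω3 : ω^3 = 1 := by linear_combination (ω - 1) * hωeq
    have hω1 : ω ≠ 1 := by
      intro h1
      rw [h1] at hωeq
      have : ((3:ℕ) : ZMod p) = 0 := by push_cast; linear_combination hωeq
      have := (ZMod.natCast_eq_zero_iff 3 p).mp this
      have := (Nat.prime_dvd_prime_iff_eq hp Nat.prime_three).mp this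
      omega
    haveI : Fact (Nat.Prime 3) := ⟨Nat.prime_three⟩
    have ho : orderOf ω = 3 := orderOf_eq_prime hω3 hω1
    have hω0 : ω ≠ 0 := by
      intro h0'
      rw [h0'] at hω3
      simp at hω3
    have hpow : ω ^ (p - 1) = 1 := ZMod.pow_card_sub_one_eq_one hω0
    have hdvd : 3 ∣ p - 1 := ho ▸ orderOf_dvd_of_pow_eq_one hpow
    omega
  constructor
  · have hx : (x : ZMod p) = 0 := by
      have : (x : ZMod p)^2 = 0 := by rw [hy] at h0; linear_combination h0
      exact pow_eq_zero_iff (by norm_num) |>.mp this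
    exact (ZMod.intCast_zmod_eq_zero_iff_dvd _ p).mp hx
  · exact (ZMod.intCast_zmod_eq_zero_iff_dvd _ p).mp hy

lemma even_fact (p : ℕ) (hp : p.Prime) (hp3 : p % 3 = 2) (N : ℕ) :
    ∀ x y : ℤ, x^2 + 3*y^2 = (N:ℤ) → Even (N.factorization p) := by
  induction N using Nat.strong_induction_on with
  | _ N ih =>
  intro x y hxy
  rcases eq_or_ne N 0 with rfl | hN0
  · simp
  by_cases hpN : p ∣ N
  swap
  · simp [Nat.factorization_eq_zero_of_not_dvd hpN]
  have hpNZ : (p:ℤ) ∣ x^2 + 3*y^2 := hxy ▸ Int.natCast_dvd_natCast.mpr hpN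
  have key : ((p:ℤ) ∣ x ∧ (p:ℤ) ∣ y) ∨ (p = 2 ∧ Odd x ∧ Odd y) := by
    by_cases hp2 : p = 2
    · subst hp2
      rcases Int.even_or_odd x with hx | hx
      · rcases Int.even_or_odd y with hy | hy
        · exact Or.inl ⟨by exact_mod_cast hx.two_dvd, by exact_mod_cast hy.two_dvd⟩
        · exfalso
          obtain ⟨a, rfl⟩ := hx
          obtain ⟨b, rfl⟩ := hy
          have hd : (2:ℤ) ∣ (a+a)^2 + 3*(2*b+1)^2 := by exact_mod_cast hpNZ
          have he : (a+a)^2 + 3*(2*b+1)^2 = 2*(2*a^2 + 6*b^2 + 6*b + 1) + 1 := by ring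
          rw [he] at hd
          omega
      · rcases Int.even_or_odd y with hy | hy
        · exfalso
          obtain ⟨a, rfl⟩ := hx
          obtain ⟨b, rfl⟩ := hy
          have hd : (2:ℤ) ∣ (2*a+1)^2 + 3*(b+b)^2 := by exact_mod_cast hpNZ
          have he : (2*a+1)^2 + 3*(b+b)^2 = 2*(2*a^2 + 2*a + 6*b^2) + 1 := by ring
          rw [he] at hd
          omega
        · exact Or.inr ⟨rfl, hx, hy⟩
    · exact Or.inl (div_both p hp hp3 hp2 x y hpNZ)
  rcases key with ⟨⟨x', rfl⟩, ⟨y', rfl⟩⟩ | ⟨rfl, hx, hy⟩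
  · have hpp : (0:ℤ) < (p:ℤ) := by exact_mod_cast hp.pos
    have hne : ((p:ℤ))^2 ≠ 0 := by positivity
    have heq : (p:ℤ)^2 * (x'^2 + 3*y'^2) = (N:ℤ) := by linear_combination hxy
    have hdvd2 : (p^2 : ℕ) ∣ N := by
      have h' : ((p^2 : ℕ):ℤ) ∣ (N:ℤ) := ⟨x'^2+3*y'^2, by push_cast; linarith [heq]⟩
      exact_mod_cast h'
    obtain ⟨M, rfl⟩ := hdvd2
    have hM0 : M ≠ 0 := by rintro rfl; simp at hN0
    have hMeq : x'^2 + 3*y'^2 = (M:ℤ) := by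
      apply mul_left_cancel₀ hne
      rw [heq]; push_cast; ring
    have hMlt : M < p^2 * M := by
      have h1 := hp.two_le
      have h2 := Nat.pos_of_ne_zero hM0
      calc M = 1 * M := (one_mul M).symm
        _ < p^2 * M := Nat.mul_lt_mul_of_lt_of_le (by nlinarith) le_rfl h2
    have hrec := ih M hMlt x' y' hMeq
    have hfe : (Nat.factorization (p^2*M)) p = 2 + (Nat.factorization M) p := by
      rw [Nat.factorization_mul (pow_ne_zero 2 hp.ne_zero) hM0, hp.factorization_pow]
      simp
    rw [hfe]
    exact (by norm_num : Even 2).add hrec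
  · obtain ⟨a, rfl⟩ := hx
    obtain ⟨b, rfl⟩ := hy
    have hx8 : (2*a+1)^2 = 8 * (a*(a+1)/2) + 1 := by
      obtain ⟨k, hk⟩ := Int.even_mul_succ_self a
      have hk2 : a*(a+1)/2 = k := by omega
      rw [hk2]; nlinarith [hk]
    have hy8 : (2*b+1)^2 = 8 * (b*(b+1)/2) + 1 := by
      obtain ⟨k, hk⟩ := Int.even_mul_succ_self b
      have hk2 : b*(b+1)/2 = k := by omega
      rw [hk2]; nlinarith [hk]
    have hN8 : (N:ℤ) % 8 = 4 := by
      have hNe : (N:ℤ) = 8 * (a*(a+1)/2) + 1 + 3 * (8 * (b*(b+1)/2) + 1) := by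
        rw [← hx8, ← hy8]; linarith [hxy]
      omega
    have hN8' : N % 8 = 4 := by
      have h' : ((N % 8 : ℕ) : ℤ) = 4 := by push_cast; omega
      exact_mod_cast h'
    have hNe : N = 4 * (N/4) := by omega
    have hodd : (N/4) % 2 = 1 := by omega
    rw [hNe, Nat.factorization_mul (by norm_num) (by omega)]
    have hf4 : (Nat.factorization 4) 2 = 2 := by
      have h4 : (4:ℕ) = 2^2 := by norm_num
      rw [h4, Nat.Prime.factorization_pow Nat.prime_two]
      simp
    have hfM : (Nat.factorization (N/4)) 2 = 0 := by
      apply Nat.factorization_eq_zero_of_not_dvd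
      omega
    simp [hf4, hfM]

lemma build (B : ℕ) (hB0 : B ≠ 0)
    (hev : ∀ p : ℕ, p.Prime → p % 3 = 2 → Even (B.factorization p)) :
    ∃ r' t' : ℕ, Real.sqrt B = (r' : ℝ) * Real.sqrt t' ∧
      ∀ p : ℕ, p.Prime → p % 3 = 2 → ¬ p ∣ t' := by
  refine ⟨∏ p ∈ B.primeFactors, p ^ (B.factorization p / 2),
      ∏ p ∈ B.primeFactors, p ^ (B.factorization p % 2), ?_, ?_⟩
  · have hkey : (∏ p ∈ B.primeFactors, p ^ (B.factorization p / 2))^2 *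
        (∏ p ∈ B.primeFactors, p ^ (B.factorization p % 2)) = B := by
      rw [← Finset.prod_pow, ← Finset.prod_mul_distrib]
      conv_rhs => rw [← Nat.factorization_prod_pow_eq_self hB0]
      rw [Nat.prod_factorization_eq_prod_primeFactors]
      apply Finset.prod_congr rfl
      intro p _
      rw [← pow_mul, ← pow_add]
      congr 1
      omega
    conv_lhs => rw [← hkey]
    push_cast
    rw [Real.sqrt_mul (by positivity)]
    rw [Real.sqrt_sq (by positivity)]
  · intro p hp hp3 hdvd
    obtain ⟨q, hq, hdq⟩ := hp.prime.exists_mem_finset_dvd hdvd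
    have hqp : q.Prime := Nat.prime_of_mem_primeFactors hq
    have hmod : B.factorization q % 2 = 0 ∨ B.factorization q % 2 = 1 := by omega
    rcases hmod with h | h
    · rw [h, pow_zero] at hdq
      exact hp.one_lt.ne' (Nat.eq_one_of_dvd_one hdq)
    · rw [h, pow_one] at hdq
      have : p = q := (Nat.prime_dvd_prime_iff_eq hp hqp).mp hdq
      subst this
      have := hev p hp hp3
      rw [Nat.even_iff] at this
      omega

theorem stmt_15 (a b c : ℝ) (ha : 0 < a) (hb : 0 < b) (hc : 0 < c)
    (hab : c < a + b) (hbc : a < b + c) (hac : b < a + c)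
    (A B C : ℕ) (hA : a ^ 2 = (A : ℝ)) (hB : b ^ 2 = (B : ℝ)) (hC : c ^ 2 = (C : ℝ))
    (n : ℕ)
    (harea : 16 * (Real.sqrt 3 / 4 * n) ^ 2 =
      (a + b + c) * (a + b - c) * (a - b + c) * (-a + b + c))
    (r t : ℕ) (hat : a = (r : ℝ) * Real.sqrt t)
    (ht : ∀ p : ℕ, p.Prime → p % 3 = 2 → ¬ p ∣ t) :
    (∃ r' t' : ℕ, b = (r' : ℝ) * Real.sqrt t' ∧ ∀ p : ℕ, p.Prime → p % 3 = 2 → ¬ p ∣ t') ∧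
    (∃ r' t' : ℕ, c = (r' : ℝ) * Real.sqrt t' ∧ ∀ p : ℕ, p.Prime → p % 3 = 2 → ¬ p ∣ t') := by
  -- nonvanishing
  have hA0 : A ≠ 0 := by
    intro h; rw [h] at hA; simp at hA; nlinarith
  have hB0 : B ≠ 0 := by
    intro h; rw [h] at hB; simp at hB; nlinarith
  have hC0 : C ≠ 0 := by
    intro h; rw [h] at hC; simp at hC; nlinarith
  have hr0 : r ≠ 0 := by
    rintro rfl; rw [hat] at ha; simp at ha
  have ht0 : t ≠ 0 := by
    rintro rfl; rw [hat] at ha; simp at ha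
  -- A = r^2 * t
  have hArt : A = r^2 * t := by
    have h1 : (A : ℝ) = ((r^2 * t : ℕ) : ℝ) := by
      rw [← hA, hat]
      push_cast
      rw [mul_pow, Real.sq_sqrt (by positivity)]
    exact_mod_cast h1
  have hEvA : ∀ p : ℕ, p.Prime → p % 3 = 2 → Even (A.factorization p) := by
    intro p hp hp3
    rw [hArt, Nat.factorization_mul (pow_ne_zero 2 hr0) ht0, Nat.factorization_pow]
    simp only [Finsupp.coe_add, Finsupp.coe_smul, Pi.add_apply, Pi.smul_apply, smul_eq_mul]
    rw [Nat.factorization_eq_zero_of_not_dvd (ht p hp hp3)]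
    simpa using even_two_mul _
  -- the key Diophantine identities
  have h3 : Real.sqrt 3 ^ 2 = 3 := Real.sq_sqrt (by norm_num)
  have hprod : 3*(n:ℝ)^2 = (a + b + c) * (a + b - c) * (a - b + c) * (-a + b + c) := by
    linear_combination harea - (n:ℝ)^2 * h3
  have hRB : ((A:ℝ) + B - C)^2 + 3*(n:ℝ)^2 = 4 * A * B := by
    rw [← hA, ← hB, ← hC]
    linear_combination hprod
  have hRC : ((A:ℝ) + C - B)^2 + 3*(n:ℝ)^2 = 4 * A * C := by
    rw [← hA, ← hB, ← hC]
    linear_combination hprod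
  have hZB : ((A:ℤ) + B - C)^2 + 3*(n:ℤ)^2 = ((4 * A * B : ℕ) : ℤ) := by
    exact_mod_cast hRB
  have hZC : ((A:ℤ) + C - B)^2 + 3*(n:ℤ)^2 = ((4 * A * C : ℕ) : ℤ) := by
    exact_mod_cast hRC
  -- parity of factorizations
  have hEv4 : ∀ p : ℕ, Even ((4:ℕ).factorization p) := by
    intro p
    have h4 : (4:ℕ) = 2^2 := by norm_num
    rw [h4, Nat.factorization_pow]
    simp only [Finsupp.coe_smul, Pi.smul_apply, smul_eq_mul]
    exact even_two_mul _
  have hEvB : ∀ p : ℕ, p.Prime → p % 3 = 2 → Even (B.factorization p) := by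
    intro p hp hp3
    have hall := even_fact p hp hp3 (4*A*B) _ _ hZB
    rw [Nat.factorization_mul (by positivity) hB0,
        Nat.factorization_mul (by norm_num) hA0] at hall
    simp only [Finsupp.coe_add, Pi.add_apply] at hall
    have h4 := hEv4 p
    have hA' := hEvA p hp hp3
    rw [Nat.even_iff] at *
    omega
  have hEvC : ∀ p : ℕ, p.Prime → p % 3 = 2 → Even (C.factorization p) := by
    intro p hp hp3
    have hall := even_fact p hp hp3 (4*A*C) _ _ hZC
    rw [Nat.factorization_mul (by positivity) hC0,
        Nat.factorization_mul (by norm_num) hA0] at hall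
    simp only [Finsupp.coe_add, Pi.add_apply] at hall
    have h4 := hEv4 p
    have hA' := hEvA p hp hp3
    rw [Nat.even_iff] at *
    omega
  have hbB : b = Real.sqrt B := by
    rw [← hB, Real.sqrt_sq hb.le]
  have hcC : c = Real.sqrt C := by
    rw [← hC, Real.sqrt_sq hc.le]
  constructor
  · obtain ⟨r', t', h1, h2⟩ := build B hB0 hEvB
    exact ⟨r', t', by rw [hbB, h1], h2⟩
  · obtain ⟨r', t', h1, h2⟩ := build C hC0 hEvC
    exact ⟨r', t', by rw [hcC, h1], h2⟩
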